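/- Fix positive reals a₀, a₁, a₂ and set A = a₀ + a₁ + a₂. Then ∫₀^∞ ∫₀^1 f^{a₁-1} b^{a₂-1} (1 + (1-b) f)^{-A} (1-b)^{a₀+a₁-1} db df = Γ(a₀)Γ(a₁)Γ(a₂)/Γ(A). -/

import Mathlib

open MeasureTheory Real Set

lemma betaC_eq_ofReal {u v : ℝ} {x : ℝ} (hx : x ∈ Ioo (0:ℝ) 1) :
    (x:ℂ) ^ ((u:ℂ) - 1) * (1 - (x:ℂ)) ^ ((v:ℂ) - 1)
      = ((x ^ (u-1) * (1-x) ^ (v-1) : ℝ) : ℂ) := by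
  obtain ⟨h0, h1⟩ := hx
  rw [Complex.ofReal_mul, Complex.ofReal_cpow h0.le, Complex.ofReal_cpow (by linarith)]
  push_cast
  ring

lemma betaC_integrableOn {u v : ℝ} (hu : 0 < u) (hv : 0 < v) :
    IntegrableOn (fun x : ℝ => (x:ℂ) ^ ((u:ℂ) - 1) * (1 - (x:ℂ)) ^ ((v:ℂ) - 1))
      (Ioo (0:ℝ) 1) := by
  have := (Complex.betaIntegral_convergent (u := u) (v := v) (by simpa using hu)
    (by simpa using hv)).1
  exact this.mono_set Ioo_subset_Ioc_self

lemma betaReal_integrableOn {u v : ℝ} (hu : 0 < u) (hv : 0 < v) :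
    IntegrableOn (fun x => x ^ (u-1) * (1-x) ^ (v-1)) (Ioo (0:ℝ) 1) := by
  have := (betaC_integrableOn hu hv).re
  refine IntegrableOn.congr_fun this (fun x hx => ?_) measurableSet_Ioo
  simp only [RCLike.re_to_complex]
  rw [betaC_eq_ofReal hx, Complex.ofReal_re]

lemma betaReal_eq {u v : ℝ} (hu : 0 < u) (hv : 0 < v) :
    ∫ x in Ioo (0:ℝ) 1, x ^ (u-1) * (1-x) ^ (v-1)
      = Gamma u * Gamma v / Gamma (u+v) := by
  have h2 : Complex.Gamma ((u:ℂ) + v) ≠ 0 :=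
    Complex.Gamma_ne_zero_of_re_pos (by simp; positivity)
  have h1 := Complex.Gamma_mul_Gamma_eq_betaIntegral (s := u) (t := v)
    (by simpa using hu) (by simpa using hv)
  have hbc : Complex.betaIntegral u v = ((Gamma u * Gamma v / Gamma (u+v) : ℝ) : ℂ) := by
    have : Complex.betaIntegral u v
        = Complex.Gamma u * Complex.Gamma v / Complex.Gamma ((u:ℂ)+v) := by
      rw [eq_div_iff h2]; linear_combination -h1
    rw [this, show ((u:ℂ)+v) = ((u+v:ℝ):ℂ) by push_cast; ring, Complex.Gamma_ofReal,
      Complex.Gamma_ofReal, Complex.Gamma_ofReal, ← Complex.ofReal_mul, ← Complex.ofReal_div]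
  have h3 : (∫ x in Ioo (0:ℝ) 1, (x:ℂ) ^ ((u:ℂ)-1) * (1-(x:ℂ)) ^ ((v:ℂ)-1))
      = Complex.betaIntegral u v := by
    rw [Complex.betaIntegral, intervalIntegral.integral_of_le (by norm_num : (0:ℝ) ≤ 1),
      integral_Ioc_eq_integral_Ioo]
  have h4 : ∫ x in Ioo (0:ℝ) 1, x ^ (u-1) * (1-x) ^ (v-1)
      = RCLike.re (∫ x in Ioo (0:ℝ) 1, (x:ℂ) ^ ((u:ℂ)-1) * (1-(x:ℂ)) ^ ((v:ℂ)-1)) := by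
    rw [← integral_re (betaC_integrableOn hu hv)]
    refine setIntegral_congr_fun measurableSet_Ioo (fun x hx => ?_)
    simp only [RCLike.re_to_complex]
    rw [betaC_eq_ofReal hx, Complex.ofReal_re]
  rw [h4, h3, hbc]
  simp [RCLike.re_to_complex]

lemma phi_hasDeriv {c : ℝ} (hc : 0 < c) {x : ℝ} (hx : x ∈ Ioo (0:ℝ) 1) :
    HasDerivWithinAt (fun y => y / (c * (1 - y))) (c / (c * (1 - x)) ^ 2) (Ioo (0:ℝ) 1) x := by
  have hd : c * (1 - x) ≠ 0 := by nlinarith [hx.2]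
  have hg : HasDerivAt (fun y : ℝ => c * (1 - y)) (-c) x := by
    simpa using ((hasDerivAt_id x).const_sub 1).const_mul c
  have h := (hasDerivAt_id x).div hg hd
  simp only [id] at h
  have heq : (1 * (c * (1 - x)) - x * (-c)) / (c * (1 - x)) ^ 2 = c / (c * (1 - x)) ^ 2 := by
    congr 1; ring
  rw [heq] at h
  exact h.hasDerivWithinAt

lemma phi_injOn {c : ℝ} (hc : 0 < c) :
    InjOn (fun y => y / (c * (1 - y))) (Ioo (0:ℝ) 1) := by
  intro x hx y hy h
  have hdx : c * (1 - x) ≠ 0 := by nlinarith [hx.2]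
  have hdy : c * (1 - y) ≠ 0 := by nlinarith [hy.2]
  field_simp at h
  rw [div_eq_div_iff (by linarith [hx.2]) (by linarith [hy.2])] at h
  nlinarith [h]

lemma phi_image {c : ℝ} (hc : 0 < c) :
    (fun y => y / (c * (1 - y))) '' (Ioo (0:ℝ) 1) = Ioi (0:ℝ) := by
  ext f
  constructor
  · rintro ⟨x, hx, rfl⟩
    have : 0 < c * (1 - x) := by nlinarith [hx.2]
    exact div_pos hx.1 this
  · intro hf
    have hf' : (0:ℝ) < f := hf
    have hd : (0:ℝ) < 1 + c * f := by positivity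
    refine ⟨c * f / (1 + c * f), ⟨by positivity, ?_⟩, ?_⟩
    · rw [div_lt_one hd]; linarith
    · have h1 : 1 - c * f / (1 + c * f) = 1 / (1 + c * f) := by field_simp; ring
      simp only [h1]
      field_simp

lemma phi_pointwise {c u v x : ℝ} (hc : 0 < c) (hx : x ∈ Ioo (0:ℝ) 1) :
    |c / (c * (1 - x)) ^ 2| * ((x / (c * (1 - x))) ^ (u - 1)
      * (1 + c * (x / (c * (1 - x)))) ^ (-(u + v)))
    = c ^ (-u) * (x ^ (u - 1) * (1 - x) ^ (v - 1)) := by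
  obtain ⟨hx0, hx1⟩ := hx
  have ht : (0:ℝ) < 1 - x := by linarith
  have h1 : 1 + c * (x / (c * (1 - x))) = (1 - x)⁻¹ := by
    field_simp
    ring
  rw [h1, Real.inv_rpow ht.le, ← Real.rpow_neg ht.le, neg_neg,
    abs_of_pos (by positivity), Real.div_rpow hx0.le (by positivity : (0:ℝ) ≤ c * (1 - x)),
    show (c * (1 - x)) ^ 2 = (c * (1 - x)) ^ ((2:ℕ):ℝ) by rw [Real.rpow_natCast],
    Real.mul_rpow hc.le ht.le, Real.mul_rpow hc.le ht.le]
  push_cast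
  have hA : c / (c ^ (2:ℝ) * (1-x) ^ (2:ℝ))
        * (x ^ (u-1) / (c ^ (u-1) * (1-x) ^ (u-1)) * (1-x) ^ (u+v))
      = (c * (c ^ (2:ℝ))⁻¹ * (c ^ (u-1))⁻¹) * x ^ (u-1)
        * (((1-x) ^ (2:ℝ))⁻¹ * ((1-x) ^ (u-1))⁻¹ * (1-x) ^ (u+v)) := by
    field_simp
  rw [hA]
  have hc1 : c * (c ^ (2:ℝ))⁻¹ * (c ^ (u-1))⁻¹ = c ^ (-u) := by
    rw [← Real.rpow_neg hc.le, ← Real.rpow_neg hc.le]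
    nth_rewrite 1 [← Real.rpow_one c]
    rw [← Real.rpow_add hc, ← Real.rpow_add hc]
    congr 1; ring
  have ht1 : ((1-x) ^ (2:ℝ))⁻¹ * ((1-x) ^ (u-1))⁻¹ * (1-x) ^ (u+v) = (1-x) ^ (v-1) := by
    rw [← Real.rpow_neg ht.le, ← Real.rpow_neg ht.le,
      ← Real.rpow_add ht, ← Real.rpow_add ht]
    congr 1; ring
  rw [hc1, ht1]
  ring

lemma betaII_integrableOn {u v c : ℝ} (hu : 0 < u) (hv : 0 < v) (hc : 0 < c) :
    IntegrableOn (fun f => f ^ (u-1) * (1 + c * f) ^ (-(u+v))) (Ioi (0:ℝ)) := by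
  have key := integrableOn_image_iff_integrableOn_abs_deriv_smul measurableSet_Ioo
    (fun x hx => phi_hasDeriv hc hx) (phi_injOn hc)
    (fun f => f ^ (u-1) * (1 + c * f) ^ (-(u+v)))
  rw [phi_image hc] at key
  rw [key]
  refine IntegrableOn.congr_fun ((betaReal_integrableOn hu hv).const_mul (c ^ (-u)))
    (fun x hx => ?_) measurableSet_Ioo
  simp only [smul_eq_mul]
  exact (phi_pointwise hc hx).symm

lemma betaII_eq {u v c : ℝ} (hu : 0 < u) (hv : 0 < v) (hc : 0 < c) :
    ∫ f in Ioi (0:ℝ), f ^ (u-1) * (1 + c * f) ^ (-(u+v))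
      = c ^ (-u) * (Gamma u * Gamma v / Gamma (u+v)) := by
  have key := integral_image_eq_integral_abs_deriv_smul measurableSet_Ioo
    (fun x hx => phi_hasDeriv hc hx) (phi_injOn hc)
    (fun f => f ^ (u-1) * (1 + c * f) ^ (-(u+v)))
  rw [phi_image hc] at key
  rw [key]
  rw [setIntegral_congr_fun measurableSet_Ioo (g := fun x => c ^ (-u) * (x ^ (u-1) * (1-x) ^ (v-1)))
    (fun x hx => by simpa [smul_eq_mul] using phi_pointwise hc hx (u := u) (v := v)),
    integral_const_mul, betaReal_eq hu hv]

theorem beta_II_beta_I_normalisation (a₀ a₁ a₂ : ℝ)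
    (h₀ : 0 < a₀) (h₁ : 0 < a₁) (h₂ : 0 < a₂) :
    ∫ f in Ioi (0 : ℝ), ∫ b in Ioo (0 : ℝ) 1,
      f ^ (a₁ - 1) * b ^ (a₂ - 1) * (1 + (1 - b) * f) ^ (-(a₀ + a₁ + a₂)) *
        (1 - b) ^ (a₀ + a₁ - 1) =
    Real.Gamma a₀ * Real.Gamma a₁ * Real.Gamma a₂ / Real.Gamma (a₀ + a₁ + a₂) := by
  have h02 : 0 < a₀ + a₂ := by linarith
  set K : ℝ := Gamma a₁ * Gamma (a₀ + a₂) / Gamma (a₁ + (a₀ + a₂)) with hK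
  set G : ℝ → ℝ → ℝ := fun f b =>
    f ^ (a₁ - 1) * b ^ (a₂ - 1) * (1 + (1 - b) * f) ^ (-(a₀ + a₁ + a₂)) *
      (1 - b) ^ (a₀ + a₁ - 1) with hG
  -- pointwise rearrangement of the slice
  have heq : ∀ b ∈ Ioo (0:ℝ) 1, ∀ f : ℝ, G f b
      = (b ^ (a₂ - 1) * (1 - b) ^ (a₀ + a₁ - 1)) *
        (f ^ (a₁ - 1) * (1 + (1 - b) * f) ^ (-(a₁ + (a₀ + a₂)))) := by
    intro b hb f
    rw [show -(a₁ + (a₀ + a₂)) = -(a₀ + a₁ + a₂) by ring]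
    simp only [hG]; ring
  -- slice integrability
  have hslice : ∀ b ∈ Ioo (0:ℝ) 1, IntegrableOn (fun f => G f b) (Ioi (0:ℝ)) := by
    intro b hb
    have hc : 0 < 1 - b := by linarith [hb.2]
    exact ((betaII_integrableOn h₁ h02 hc).const_mul
      (b ^ (a₂ - 1) * (1 - b) ^ (a₀ + a₁ - 1))).congr
      (ae_of_all _ fun f => (heq b hb f).symm)
  -- slice value
  have hval : ∀ b ∈ Ioo (0:ℝ) 1, (∫ f in Ioi (0:ℝ), G f b)
      = K * (b ^ (a₂ - 1) * (1 - b) ^ (a₀ - 1)) := by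
    intro b hb
    have hc : 0 < 1 - b := by linarith [hb.2]
    rw [integral_congr_ae (ae_of_all _ (heq b hb)), integral_const_mul,
      betaII_eq h₁ h02 hc]
    have hpow : (1 - b) ^ (a₀ + a₁ - 1) * (1 - b) ^ (-a₁) = (1 - b) ^ (a₀ - 1) := by
      rw [← Real.rpow_add hc]; congr 1; ring
    rw [← hpow]; ring
  -- measurability
  have hmeas : Measurable (fun p : ℝ × ℝ => G p.1 p.2) := by
    simp only [hG]
    fun_prop
  have haesm : AEStronglyMeasurable (Function.uncurry G)
      ((volume.restrict (Ioi (0:ℝ))).prod (volume.restrict (Ioo (0:ℝ) 1))) :=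
    (hmeas.aestronglyMeasurable)
  -- nonnegativity on the relevant set
  have hnorm : ∀ b ∈ Ioo (0:ℝ) 1, (∫ f in Ioi (0:ℝ), ‖G f b‖)
      = K * (b ^ (a₂ - 1) * (1 - b) ^ (a₀ - 1)) := by
    intro b hb
    rw [← hval b hb]
    refine setIntegral_congr_fun measurableSet_Ioi (fun f hf => ?_)
    have hf' : (0:ℝ) < f := hf
    have hb0 : (0:ℝ) < b := hb.1
    have h1 : (0:ℝ) < 1 - b := by linarith [hb.2]
    have h2 : (0:ℝ) < 1 + (1 - b) * f := by positivity
    rw [Real.norm_eq_abs, abs_of_nonneg]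
    simp only [hG]
    positivity
  -- product integrability
  have hint : Integrable (Function.uncurry G)
      ((volume.restrict (Ioi (0:ℝ))).prod (volume.restrict (Ioo (0:ℝ) 1))) := by
    rw [integrable_prod_iff' haesm]
    constructor
    · filter_upwards [ae_restrict_mem measurableSet_Ioo] with b hb
      exact hslice b hb
    · refine Integrable.congr
        (f := fun b : ℝ => K * (b ^ (a₂-1) * (1-b) ^ (a₀-1)))
        ((betaReal_integrableOn h₂ h₀).const_mul K) ?_
      filter_upwards [ae_restrict_mem measurableSet_Ioo] with b hb
      exact (hnorm b hb).symm
  -- Fubini swap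
  rw [show (∫ f in Ioi (0 : ℝ), ∫ b in Ioo (0 : ℝ) 1,
      f ^ (a₁ - 1) * b ^ (a₂ - 1) * (1 + (1 - b) * f) ^ (-(a₀ + a₁ + a₂)) *
        (1 - b) ^ (a₀ + a₁ - 1)) = ∫ f in Ioi (0:ℝ), ∫ b in Ioo (0:ℝ) 1, G f b from rfl,
    integral_integral_swap hint]
  rw [setIntegral_congr_fun measurableSet_Ioo hval, integral_const_mul, betaReal_eq h₂ h₀]
  have hne1 : Gamma (a₂ + a₀) ≠ 0 := (Gamma_pos_of_pos (by linarith)).ne'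
  have hne2 : Gamma (a₀ + a₁ + a₂) ≠ 0 := (Gamma_pos_of_pos (by linarith)).ne'
  rw [hK, show a₁ + (a₀ + a₂) = a₀ + a₁ + a₂ by ring, show a₂ + a₀ = a₀ + a₂ by ring]
  have hne3 : Gamma (a₀ + a₂) ≠ 0 := (Gamma_pos_of_pos h02).ne'
  field_simp
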